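/- Every nonempty word has exactly one normal decomposition; consequently, for every t ≥ 1, Σ_{l≥1} Σ_{(k₁,…,k_l) : k₁ ≥ 1, k_i ≥ 2 for i ≥ 2, k₁+⋯+k_l = t} W_{k₁⋯k_l} = 3^t. Moreover, the number of blocks l of the normal decomposition of σ equals ω(σ). -/

import Mathlib

open Filter Finset

/-- A letter of the alphabet `{1,2,3}`. -/
abbrev Letter := Fin 3

/-- A word: a finite (possibly empty) sequence of letters. -/
abbrev Word := List Letter

/-- Adjacency of two words: `σ ≠ τ`, and writing `σ = β ++ σ'`, `τ = β ++ τ'` with `β`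
the longest common prefix, either one of `σ'`, `τ'` is empty and the other uses at most two
distinct letters, or `σ' = i j^k` and `τ' = j i^{k'}` for distinct letters `i ≠ j`. -/
def WordAdj (σ τ : Word) : Prop :=
  σ ≠ τ ∧ ∃ β σ' τ' : Word,
    σ = β ++ σ' ∧ τ = β ++ τ' ∧
    ((σ' = [] ∧ τ'.toFinset.card ≤ 2) ∨
     (τ' = [] ∧ σ'.toFinset.card ≤ 2) ∨
     (∃ (i j : Letter) (k k' : ℕ), i ≠ j ∧
        σ' = i :: List.replicate k j ∧ τ' = j :: List.replicate k' i))

/-- The graph `G_t`: vertices are the words of length at most `t` (all other words are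
isolated), with adjacency `WordAdj`. -/
def Gt (t : ℕ) : SimpleGraph Word where
  Adj σ τ := σ.length ≤ t ∧ τ.length ≤ t ∧ WordAdj σ τ
  symm := by
    constructor
    rintro σ τ ⟨h1, h2, hne, β, σ', τ', e1, e2, h3⟩
    refine ⟨h2, h1, hne.symm, β, τ', σ', e2, e1, ?_⟩
    rcases h3 with h | h | ⟨i, j, k, k', hij, hs, ht⟩
    · exact Or.inr (Or.inl h)
    · exact Or.inl h
    · exact Or.inr (Or.inr ⟨j, i, k', k, hij.symm, ht, hs⟩)
  loopless := ⟨fun σ h => h.2.2.1 rfl⟩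

/-- `dW t σ τ` is the geodesic distance `d_t(σ,τ)` in the graph `G_t`. -/
noncomputable def dW (t : ℕ) (σ τ : Word) : ℕ := (Gt t).dist σ τ

/-- Length of the longest suffix of `σ` using at most two distinct letters. -/
def suffLen (σ : Word) : ℕ :=
  Nat.findGreatest (fun m => (σ.drop (σ.length - m)).toFinset.card ≤ 2) σ.length

/-- `fW σ = τ₂` where `σ = τ₂τ₁` and `τ₁` is the longest suffix of `σ` using at most two
distinct letters; `fW [] = []`. -/
def fW (σ : Word) : Word := σ.take (σ.length - suffLen σ)

/-- `ω(σ)`: the least `n ≥ 0` with `f^[n] σ = ∅`. -/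
noncomputable def omegaW (σ : Word) : ℕ := sInf {n : ℕ | fW^[n] σ = []}

/-- `L(σ) = d_{|σ|}(σ, ∅) - 1` for nonempty `σ`, and `L(∅) = 0`. -/
noncomputable def Lw (σ : Word) : ℕ := if σ = [] then 0 else dW σ.length σ [] - 1

/-- `ᾱ_m`: the average of `L` over the `3^m` words of length `m`. -/
noncomputable def alphaBar (m : ℕ) : ℝ :=
  (∑ v : Fin m → Letter, (Lw (List.ofFn v) : ℝ)) / 3 ^ m

/-- `α* = sup_{m ≥ 1} ᾱ_m / m`. -/
noncomputable def alphaStar : ℝ :=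
  sSup {x : ℝ | ∃ m : ℕ, 1 ≤ m ∧ x = alphaBar m / m}

/-- `#V_t = (3^{t+1} - 1)/2`, the number of vertices of `G_t`, as a real number. -/
noncomputable def Nv (t : ℕ) : ℝ := ((3 : ℝ) ^ (t + 1) - 1) / 2

/-- The sum of `d_t(σ,τ)` over all ordered pairs of words `σ, τ ∈ V_t`
(twice the sum over unordered pairs of distinct words). -/
noncomputable def pairSum (t : ℕ) : ℝ :=
  ∑ k ∈ range (t + 1), ∑ l ∈ range (t + 1),
    ∑ v : Fin k → Letter, ∑ w : Fin l → Letter,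
      (dW t (List.ofFn v) (List.ofFn w) : ℝ)

/-- The average path length `D̄(t)` of `G_t`. -/
noncomputable def Dbar (t : ℕ) : ℝ := pairSum t / (Nv t * (Nv t - 1))

/-- `κ_t = (Σ_{σ ∈ V_t} L(σ)) / #V_t`. -/
noncomputable def kappa (t : ℕ) : ℝ :=
  (∑ k ∈ range (t + 1), ∑ v : Fin k → Letter, (Lw (List.ofFn v) : ℝ)) / Nv t

/-- `π_t`: the sum of `d_t(σ,τ)` over unordered pairs of distinct `σ, τ ∈ V_t`. -/
noncomputable def piT (t : ℕ) : ℝ := pairSum t / 2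

/-- `μ_t`: the sum of `d_t(σ,τ)` over unordered pairs of distinct `σ, τ ∈ V_t`
having the same first letter. -/
noncomputable def muT (t : ℕ) : ℝ :=
  (∑ i : Letter, ∑ k ∈ range t, ∑ l ∈ range t,
    ∑ v : Fin k → Letter, ∑ w : Fin l → Letter,
      (dW t (i :: List.ofFn v) (i :: List.ofFn w) : ℝ)) / 2

/-- `λ_t = Σ_{σ ∈ V_t, σ ≠ ∅} d_t(σ, ∅)`. -/
noncomputable def lambdaT (t : ℕ) : ℝ :=
  ∑ k ∈ Finset.Icc 1 t, ∑ v : Fin k → Letter, (dW t (List.ofFn v) [] : ℝ)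

/-- `ν_t = Σ_{i<j} Σ_{|σ'|,|τ'| ≤ t-1} d_t(iσ', jτ')`. -/
noncomputable def nuT (t : ℕ) : ℝ :=
  ∑ i : Letter, ∑ j : Letter,
    if i < j then
      ∑ k ∈ range t, ∑ l ∈ range t,
        ∑ v : Fin k → Letter, ∑ w : Fin l → Letter,
          (dW t (i :: List.ofFn v) (j :: List.ofFn w) : ℝ)
    else 0

/-- `IsNormalDecomp σ τs`: `τs = [τ₁, …, τ_l]` (with `l ≥ 1`) is a normal decomposition
of `σ`: `σ = τ₁⋯τ_l`; `#τ₁ ≤ 2`, `|τ₁| ≥ 1`; `#τ_i = 2`, `|τ_i| ≥ 2` for `i ≥ 2`; and for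
`i < l` the last letter of `τ_i` is the unique letter of the alphabet not appearing
in `τ_{i+1}`. -/
def IsNormalDecomp (σ : Word) (τs : List Word) : Prop :=
  σ = τs.flatten ∧ τs ≠ [] ∧
  (∀ i : Fin τs.length,
    (i.1 = 0 → 1 ≤ (τs.get i).length ∧ (τs.get i).toFinset.card ≤ 2) ∧
    (1 ≤ i.1 → 2 ≤ (τs.get i).length ∧ (τs.get i).toFinset.card = 2)) ∧
  (∀ i : ℕ, ∀ h : i + 1 < τs.length,
    ∃ c : Letter, (τs.get ⟨i, Nat.lt_of_succ_lt h⟩).getLast? = some c ∧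
      c ∉ (τs.get ⟨i + 1, h⟩).toFinset ∧
      ∀ c' : Letter, c' ∉ (τs.get ⟨i + 1, h⟩).toFinset → c' = c)

/-- `W_{k₁⋯k_l}`: the number of words of length `k₁ + ⋯ + k_l` admitting a normal
decomposition into blocks of lengths `k₁, …, k_l`. -/
noncomputable def Wcount (ks : List ℕ) : ℕ :=
  Nat.card {σ : Word // ∃ τs : List Word, IsNormalDecomp σ τs ∧ τs.map List.length = ks}

/-- `Ē(t) = 3^{-t} Σ_{q ≥ 1} Σ_{k₁ ≥ 1, k₂,…,k_q ≥ 2, k₁+⋯+k_q = t} (q-1)·W_{k₁⋯k_q}`. -/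
noncomputable def Ebar (t : ℕ) : ℝ :=
  ((∑ c : Composition t,
      if ∀ i ∈ c.blocks.tail, 2 ≤ i then
        (c.blocks.length - 1) * Wcount c.blocks
      else 0 : ℕ) : ℝ) / 3 ^ t

section NDAux

lemma sfx_mono {σ : Word} {m m' : ℕ} (h : m ≤ m')
    (h2 : (σ.drop (σ.length - m')).toFinset.card ≤ 2) :
    (σ.drop (σ.length - m)).toFinset.card ≤ 2 := by
  refine le_trans (Finset.card_le_card ?_) h2
  intro x hx
  simp only [List.mem_toFinset] at hx ⊢
  have : σ.drop (σ.length - m) = (σ.drop (σ.length - m')).drop ((σ.length - m) - (σ.length - m')) := by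
    rw [List.drop_drop]; congr 1; omega
  rw [this] at hx
  exact List.drop_subset _ _ hx

lemma suffLen_le (σ : Word) : suffLen σ ≤ σ.length := Nat.findGreatest_le _

lemma suffLen_spec (σ : Word) : (σ.drop (σ.length - suffLen σ)).toFinset.card ≤ 2 :=
  Nat.findGreatest_spec (P := fun m => (σ.drop (σ.length - m)).toFinset.card ≤ 2)
    (m := 0) (Nat.zero_le _) (by simp)

lemma le_suffLen {σ : Word} {m : ℕ} (h : m ≤ σ.length)
    (h2 : (σ.drop (σ.length - m)).toFinset.card ≤ 2) : m ≤ suffLen σ :=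
  Nat.le_findGreatest h h2

lemma suffLen_pos {σ : Word} (h : σ ≠ []) : 1 ≤ suffLen σ := by
  have hl : 1 ≤ σ.length := List.length_pos_iff.2 h
  apply le_suffLen hl
  calc (σ.drop (σ.length - 1)).toFinset.card ≤ (σ.drop (σ.length - 1)).length :=
        List.toFinset_card_le _
    _ ≤ 2 := by rw [List.length_drop]; omega

lemma fW_length (σ : Word) : (fW σ).length = σ.length - suffLen σ := by
  simp [fW, List.length_take]

lemma fW_lt {σ : Word} (h : σ ≠ []) : (fW σ).length < σ.length := by
  have := suffLen_pos h
  have hl : 1 ≤ σ.length := List.length_pos_iff.2 h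
  rw [fW_length]; omega

def decomp (σ : Word) : List Word :=
  if h : σ = [] then [] else decomp (fW σ) ++ [σ.drop ((fW σ).length)]
termination_by σ.length
decreasing_by exact fW_lt h

lemma decomp_nil : decomp [] = [] := by rw [decomp]; simp

lemma decomp_ne {σ : Word} (h : σ ≠ []) :
    decomp σ = decomp (fW σ) ++ [σ.drop ((fW σ).length)] := by
  rw [decomp]; simp [h]

lemma fW_append_suffix (σ : Word) : fW σ ++ σ.drop ((fW σ).length) = σ := by
  rw [fW_length]; exact List.take_append_drop _ _

-- complement uniqueness in Fin 3
lemma letterComplUnique {s : Finset Letter} (hs : s.card = 2) {c c' : Letter}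
    (hc : c ∉ s) (hc' : c' ∉ s) : c' = c := by
  by_contra hne
  have h1 : (insert c' (insert c s)).card = 4 := by
    rw [Finset.card_insert_of_notMem, Finset.card_insert_of_notMem hc, hs]
    simp [hc', hne]
  have h2 : (insert c' (insert c s)).card ≤ 3 := by
    have := Finset.card_le_univ (insert c' (insert c s))
    simpa using this
  omega

lemma nd_one {σ : Word} (h : σ ≠ []) (hc : σ.toFinset.card ≤ 2) :
    IsNormalDecomp σ [σ] := by
  refine ⟨by simp, by simp, ?_, ?_⟩
  · intro i
    obtain ⟨iv, hiv⟩ := i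
    simp only [List.length_cons, List.length_nil] at hiv
    have hiv0 : iv = 0 := by omega
    subst hiv0
    exact ⟨fun _ => ⟨List.length_pos_iff.2 h, hc⟩, fun h1 => by simp at h1⟩
  · intro i hi; simp at hi

lemma blocks_ne_nil {σ : Word} {τs : List Word} (h : IsNormalDecomp σ τs) :
    ∀ i : Fin τs.length, τs.get i ≠ [] := by
  intro i
  rcases Nat.eq_zero_or_pos i.1 with h0 | h0
  · have := (h.2.2.1 i).1 h0
    exact List.length_pos_iff.1 this.1
  · have := (h.2.2.1 i).2 h0
    exact List.length_pos_iff.1 (by omega)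

lemma nd_sigma_ne_nil {σ : Word} {τs : List Word} (h : IsNormalDecomp σ τs) : σ ≠ [] := by
  rw [h.1, List.flatten_ne_nil_iff]
  have hne := h.2.1
  exact ⟨τs.get ⟨0, List.length_pos_iff.2 hne⟩, List.get_mem _ _, blocks_ne_nil h _⟩

lemma flatten_getLast? {L : List Word} (hL : L ≠ []) (hlast : L.getLast hL ≠ []) :
    L.flatten.getLast? = (L.getLast hL).getLast? := by
  conv_lhs => rw [← List.dropLast_append_getLast hL]
  rw [List.flatten_append, List.flatten_cons, List.flatten_nil, List.append_nil,
    List.getLast?_append, List.getLast?_eq_getLast hlast]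
  simp

lemma nd_getLast? {σ : Word} {τs : List Word} (h : IsNormalDecomp σ τs) (hne : τs ≠ []) :
    σ.getLast? = (τs.getLast hne).getLast? := by
  rw [h.1]
  refine flatten_getLast? hne ?_
  rw [List.getLast_eq_getElem]
  exact blocks_ne_nil h ⟨τs.length - 1, by have := List.length_pos_iff.2 hne; omega⟩

lemma nd_append {ρ τ : Word} {L : List Word} (h : IsNormalDecomp ρ L)
    (hτl : 2 ≤ τ.length) (hτc : τ.toFinset.card = 2)
    {c : Letter} (hc : ρ.getLast? = some c) (hcm : c ∉ τ.toFinset) :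
    IsNormalDecomp (ρ ++ τ) (L ++ [τ]) := by
  have hne := h.2.1
  have hLpos : 0 < L.length := List.length_pos_iff.2 hne
  have hlg : (L.getLast hne).getLast? = some c := (nd_getLast? h hne).symm.trans hc
  obtain ⟨hflat, -, hblocks, hlink⟩ := h
  refine ⟨by rw [hflat, List.flatten_append, List.flatten_cons, List.flatten_nil,
      List.append_nil], by simp, ?_, ?_⟩
  · intro i
    rcases lt_or_ge i.1 L.length with hi | hi
    · have hg : (L ++ [τ]).get i = L.get ⟨i.1, hi⟩ := by
        simp [List.get_eq_getElem, List.getElem_append_left hi]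
      rw [hg]
      exact hblocks ⟨i.1, hi⟩
    · have hi2 : i.1 = L.length := by have := i.2; simp at this; omega
      have hg : (L ++ [τ]).get i = τ := by
        simp only [List.get_eq_getElem]
        exact List.getElem_concat_length hi2 (by simp; omega)
      rw [hg]
      constructor
      · intro h0; omega
      · intro _; exact ⟨hτl, hτc⟩
  · intro i hi
    have hi1 : i + 1 < L.length + 1 := by simpa using hi
    rcases lt_or_ge (i + 1) L.length with hilt | hige
    · obtain ⟨c₀, hc₀, hc₀m, hc₀u⟩ := hlink i hilt
      have hg1 : (L ++ [τ]).get ⟨i, Nat.lt_of_succ_lt hi⟩ = L.get ⟨i, Nat.lt_of_succ_lt hilt⟩ := by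
        simp [List.get_eq_getElem, List.getElem_append_left (Nat.lt_of_succ_lt hilt)]
      have hg2 : (L ++ [τ]).get ⟨i + 1, hi⟩ = L.get ⟨i + 1, hilt⟩ := by
        simp [List.get_eq_getElem, List.getElem_append_left hilt]
      rw [hg1, hg2]
      exact ⟨c₀, hc₀, hc₀m, hc₀u⟩
    · have hieq : i + 1 = L.length := by omega
      have hg2 : (L ++ [τ]).get ⟨i + 1, hi⟩ = τ := by
        simp only [List.get_eq_getElem]
        exact List.getElem_concat_length hieq _
      have hg1 : (L ++ [τ]).get ⟨i, Nat.lt_of_succ_lt hi⟩ = L.getLast hne := by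
        rw [List.getLast_eq_getElem]
        simp only [List.get_eq_getElem]
        rw [List.getElem_append_left (by omega : i < L.length)]
        congr 1
        omega
      rw [hg1, hg2]
      exact ⟨c, hlg, hcm, fun c' hc' => letterComplUnique hτc hcm hc'⟩

lemma suffLen_eq_of_fW_nil {σ : Word} (h : σ ≠ []) (hf : fW σ = []) :
    suffLen σ = σ.length := by
  have h1 : (fW σ).length = 0 := by rw [hf]; rfl
  rw [fW_length] at h1
  have := suffLen_le σ
  omega

lemma fW_ne_lt {σ : Word} (hf : fW σ ≠ []) : suffLen σ < σ.length := by
  have h1 : (fW σ).length ≠ 0 := fun h => hf (List.length_eq_zero_iff.1 h)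
  rw [fW_length] at h1
  omega

lemma notP_succ {σ : Word} (h : suffLen σ < σ.length) :
    ¬ ((σ.drop (σ.length - (suffLen σ + 1))).toFinset.card ≤ 2) :=
  Nat.findGreatest_is_greatest
    (P := fun m => (σ.drop (σ.length - m)).toFinset.card ≤ 2)
    (Nat.lt_succ_self _) h

lemma drop_succ_eq {σ : Word} (h : suffLen σ < σ.length) :
    σ.drop (σ.length - (suffLen σ + 1)) =
      (σ[σ.length - (suffLen σ + 1)]'(by omega)) :: σ.drop (σ.length - suffLen σ) := by
  have e : σ.length - (suffLen σ + 1) + 1 = σ.length - suffLen σ := by omega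
  rw [List.drop_eq_getElem_cons (by omega : σ.length - (suffLen σ + 1) < σ.length)]
  simp only [e]

lemma card_tau {σ : Word} (h : suffLen σ < σ.length) :
    (σ.drop (σ.length - suffLen σ)).toFinset.card = 2 := by
  have h1 := suffLen_spec σ
  by_contra hcon
  apply notP_succ h
  rw [drop_succ_eq h, List.toFinset_cons]
  calc (insert _ (σ.drop (σ.length - suffLen σ)).toFinset).card
      ≤ (σ.drop (σ.length - suffLen σ)).toFinset.card + 1 := Finset.card_insert_le _ _
    _ ≤ 2 := by omega

lemma c_not_mem {σ : Word} (h : suffLen σ < σ.length) :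
    (σ[σ.length - (suffLen σ + 1)]'(by omega)) ∉
      (σ.drop (σ.length - suffLen σ)).toFinset := by
  intro hmem
  apply notP_succ h
  rw [drop_succ_eq h, List.toFinset_cons, Finset.insert_eq_self.2 hmem]
  exact suffLen_spec σ

lemma fW_getLast? {σ : Word} (hf : fW σ ≠ []) :
    (fW σ).getLast? = some (σ[σ.length - (suffLen σ + 1)]'(by have := fW_ne_lt hf; omega)) := by
  have h := fW_ne_lt hf
  rw [List.getLast?_eq_getElem?, fW_length]
  unfold fW
  rw [List.getElem?_take, if_pos (by omega)]
  rw [List.getElem?_eq_getElem (by omega : σ.length - suffLen σ - 1 < σ.length)]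
  congr 1

theorem decomp_nd : ∀ σ : Word, σ ≠ [] → IsNormalDecomp σ (decomp σ) := by
  have main : ∀ n (σ : Word), σ.length ≤ n → σ ≠ [] → IsNormalDecomp σ (decomp σ) := by
    intro n
    induction n with
    | zero =>
      intro σ h1 h2
      have := List.length_pos_iff.2 h2
      omega
    | succ n IH =>
      intro σ hlen hne
      by_cases hf : fW σ = []
      · rw [decomp_ne hne, hf, decomp_nil, List.nil_append]
        simp only [List.length_nil, List.drop_zero]
        apply nd_one hne
        have hk := suffLen_eq_of_fW_nil hne hf
        have h2 := suffLen_spec σ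
        rw [hk] at h2
        simpa using h2
      · rw [decomp_ne hne]
        have hflt := fW_lt hne
        have h1 : IsNormalDecomp (fW σ) (decomp (fW σ)) := IH (fW σ) (by omega) hf
        have hkn : suffLen σ < σ.length := fW_ne_lt hf
        have hτc : (σ.drop ((fW σ).length)).toFinset.card = 2 := by
          rw [fW_length]; exact card_tau hkn
        have hτl : 2 ≤ (σ.drop ((fW σ).length)).length := by
          calc 2 = (σ.drop ((fW σ).length)).toFinset.card := hτc.symm
            _ ≤ _ := List.toFinset_card_le _
        have hcm : (σ[σ.length - (suffLen σ + 1)]'(by omega)) ∉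
            (σ.drop ((fW σ).length)).toFinset := by
          rw [fW_length]; exact c_not_mem hkn
        have key := nd_append h1 hτl hτc (fW_getLast? hf) hcm
        rw [fW_append_suffix σ] at key
        exact key
  exact fun σ h => main σ.length σ le_rfl h

lemma drop_len_sub_one {l : Word} (h : l ≠ []) :
    l.drop (l.length - 1) = [l.getLast h] := by
  have hpos : 0 < l.length := List.length_pos_iff.2 h
  have e : l.length - 1 + 1 = l.length := by omega
  rw [List.drop_eq_getElem_cons (by omega : l.length - 1 < l.length)]
  simp only [e, List.drop_length, List.getLast_eq_getElem]

lemma nd_sigma_eq {σ : Word} {τs : List Word} (h : IsNormalDecomp σ τs) (hne : τs ≠ []) :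
    σ = (τs.dropLast).flatten ++ τs.getLast hne := by
  conv_lhs => rw [h.1, ← List.dropLast_append_getLast hne]
  rw [List.flatten_append]
  simp

lemma nd_last_card {σ : Word} {τs : List Word} (h : IsNormalDecomp σ τs) (hne : τs ≠ []) :
    (τs.getLast hne).toFinset.card ≤ 2 := by
  have hpos : 0 < τs.length := List.length_pos_iff.2 hne
  rw [List.getLast_eq_getElem]
  have hb := h.2.2.1 ⟨τs.length - 1, by omega⟩
  rcases Nat.eq_zero_or_pos (τs.length - 1) with h0 | h0
  · exact (hb.1 h0).2
  · exact le_of_eq (hb.2 h0).2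

lemma nd_suffLen {σ : Word} {τs : List Word} (h : IsNormalDecomp σ τs) (hne : τs ≠ []) :
    suffLen σ = (τs.getLast hne).length := by
  have hpos : 0 < τs.length := List.length_pos_iff.2 hne
  have hσ : σ = (τs.dropLast).flatten ++ τs.getLast hne := nd_sigma_eq h hne
  have hlen : σ.length = ((τs.dropLast).flatten).length + (τs.getLast hne).length := by
    rw [hσ]; simp
  have hdropB : σ.drop (σ.length - (τs.getLast hne).length) = τs.getLast hne := by
    have e : σ.length - (τs.getLast hne).length = ((τs.dropLast).flatten).length := by omega
    rw [e, hσ, List.drop_left]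
  have hge : (τs.getLast hne).length ≤ suffLen σ := by
    apply le_suffLen (by omega)
    rw [hdropB]
    exact nd_last_card h hne
  have hle : suffLen σ ≤ (τs.getLast hne).length := by
    rcases eq_or_lt_of_le (Nat.succ_le_of_lt hpos) with h1 | h2
    · -- τs.length = 1
      obtain ⟨a, ha⟩ := List.length_eq_one_iff.1 h1.symm
      have hσB : σ.length = (τs.getLast hne).length := by
        subst ha; simpa using hlen
      calc suffLen σ ≤ σ.length := suffLen_le σ
        _ = _ := hσB
    · -- τs.length ≥ 2
      have hBcard : (τs.getLast hne).toFinset.card = 2 := by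
        rw [List.getLast_eq_getElem]
        exact ((h.2.2.1 ⟨τs.length - 1, by omega⟩).2 (by show 1 ≤ τs.length - 1; omega)).2
      have hdne : τs.dropLast ≠ [] := by
        have hh : τs.dropLast.length = τs.length - 1 := List.length_dropLast
        intro hc; rw [hc] at hh; simp at hh; omega
      obtain ⟨c, hc1, hc2, _⟩ := h.2.2.2 (τs.length - 2) (by omega)
      have hdlast : τs.dropLast.getLast hdne = τs.get ⟨τs.length - 2, by omega⟩ := by
        rw [List.getLast_eq_getElem]
        simp only [List.get_eq_getElem, List.getElem_dropLast, List.length_dropLast]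
        congr 1 <;> omega
      have hge2 : τs.get ⟨τs.length - 2 + 1, by omega⟩ = τs.getLast hne := by
        rw [List.getLast_eq_getElem]
        simp only [List.get_eq_getElem]
        congr 1 <;> omega
      rw [hge2] at hc2
      set ρ' := (τs.dropLast).flatten with hρ'
      have hρlast : ρ'.getLast? = some c := by
        have hblk : τs.dropLast.getLast hdne ≠ [] := by
          rw [hdlast]
          exact blocks_ne_nil h _
        rw [hρ', flatten_getLast? hdne hblk, hdlast]
        exact hc1
      have hρne : ρ' ≠ [] := by
        intro hcon
        rw [hcon] at hρlast
        simp at hρlast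
      have hdropc : σ.drop (σ.length - ((τs.getLast hne).length + 1)) = c :: τs.getLast hne := by
        have hρpos : 0 < ρ'.length := List.length_pos_iff.2 hρne
        have e1 : σ.length - ((τs.getLast hne).length + 1) = ρ'.length - 1 := by omega
        rw [e1, hσ, List.drop_append_of_le_length (by omega), drop_len_sub_one hρne]
        have hcl : ρ'.getLast hρne = c := by
          have hl := List.getLast?_eq_getLast hρne
          rw [hρlast] at hl
          exact (Option.some_injective _ hl.symm)
        rw [hcl]
        rfl
      by_contra hcon
      have hP : (σ.drop (σ.length - ((τs.getLast hne).length + 1))).toFinset.card ≤ 2 :=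
        sfx_mono (by omega) (suffLen_spec σ)
      rw [hdropc, List.toFinset_cons] at hP
      rw [Finset.card_insert_of_notMem hc2, hBcard] at hP
      omega
  omega

lemma nd_fW {σ : Word} {τs : List Word} (h : IsNormalDecomp σ τs) (hne : τs ≠ []) :
    fW σ = (τs.dropLast).flatten ∧
      σ.drop ((fW σ).length) = τs.getLast hne := by
  have hσ : σ = (τs.dropLast).flatten ++ τs.getLast hne := nd_sigma_eq h hne
  have hlen : σ.length = ((τs.dropLast).flatten).length + (τs.getLast hne).length :=
    hσ ▸ List.length_append
  have hsl := nd_suffLen h hne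
  have h1 : fW σ = (τs.dropLast).flatten := by
    unfold fW
    have e : σ.length - suffLen σ = ((τs.dropLast).flatten).length := by omega
    rw [e]
    conv_lhs => rw [hσ]
    exact List.take_left
  refine ⟨h1, ?_⟩
  rw [h1]
  conv_lhs => rw [hσ]
  exact List.drop_left

lemma nd_dropLast {σ : Word} {τs : List Word} (h : IsNormalDecomp σ τs)
    (h2 : 2 ≤ τs.length) : IsNormalDecomp ((τs.dropLast).flatten) τs.dropLast := by
  have hdlen : τs.dropLast.length = τs.length - 1 := List.length_dropLast
  refine ⟨rfl, ?_, ?_, ?_⟩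
  · intro hc; rw [hc] at hdlen; simp at hdlen; omega
  · intro i
    have hi : i.1 < τs.length := by have := i.2; omega
    have hg : τs.dropLast.get i = τs.get ⟨i.1, hi⟩ := by
      simp [List.get_eq_getElem, List.getElem_dropLast]
    rw [hg]
    exact h.2.2.1 ⟨i.1, hi⟩
  · intro i hi
    have hi' : i + 1 < τs.length := by omega
    obtain ⟨c, hc1, hc2, hc3⟩ := h.2.2.2 i hi'
    have hg1 : τs.dropLast.get ⟨i, Nat.lt_of_succ_lt hi⟩ = τs.get ⟨i, Nat.lt_of_succ_lt hi'⟩ := by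
      simp [List.get_eq_getElem, List.getElem_dropLast]
    have hg2 : τs.dropLast.get ⟨i + 1, hi⟩ = τs.get ⟨i + 1, hi'⟩ := by
      simp [List.get_eq_getElem, List.getElem_dropLast]
    rw [hg1, hg2]
    exact ⟨c, hc1, hc2, hc3⟩

theorem nd_unique : ∀ σ : Word, ∀ τs : List Word, IsNormalDecomp σ τs → τs = decomp σ := by
  have main : ∀ n (σ : Word) (τs : List Word), σ.length ≤ n →
      IsNormalDecomp σ τs → τs = decomp σ := by
    intro n
    induction n with
    | zero =>
      intro σ τs h1 h2
      exact absurd (List.length_pos_iff.2 (nd_sigma_ne_nil h2)) (by omega)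
    | succ n IH =>
      intro σ τs hlen h
      have hne := nd_sigma_ne_nil h
      have hτne := h.2.1
      obtain ⟨hfW, hlast⟩ := nd_fW h hτne
      rw [decomp_ne hne]
      conv_lhs => rw [← List.dropLast_append_getLast hτne]
      rw [hlast]
      congr 1
      rcases eq_or_lt_of_le (Nat.succ_le_of_lt (List.length_pos_iff.2 hτne)) with h1 | h2
      · obtain ⟨a, ha⟩ := List.length_eq_one_iff.1 h1.symm
        subst ha
        have hz : fW σ = [] := by rw [hfW]; rfl
        rw [hz, decomp_nil]
        rfl
      · have hd := nd_dropLast h h2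
        rw [← hfW] at hd
        have hflt : (fW σ).length < σ.length := fW_lt hne
        exact IH (fW σ) τs.dropLast (by omega) hd
  exact fun σ τs h => main σ.length σ τs le_rfl h

lemma fW_iter_len : ∀ n (σ : Word), σ.length ≤ n → fW^[n] σ = [] := by
  intro n
  induction n with
  | zero => intro σ h; rw [Function.iterate_zero_apply]; exact List.length_eq_zero_iff.1 (by omega)
  | succ n IH =>
    intro σ h
    rw [Function.iterate_succ_apply]
    by_cases hσ : σ = []
    · apply IH
      subst hσ
      simp [fW]
    · exact IH _ (by have := fW_lt hσ; omega)

lemma omegaW_eq {σ : Word} {n : ℕ} (h1 : fW^[n] σ = [])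
    (h2 : ∀ m < n, fW^[m] σ ≠ []) : omegaW σ = n := by
  refine le_antisymm (Nat.sInf_le h1) ?_
  by_contra hcon
  push_neg at hcon
  have hmem : omegaW σ ∈ {m : ℕ | fW^[m] σ = []} := Nat.sInf_mem ⟨n, h1⟩
  exact h2 _ hcon hmem

lemma nd_omega : ∀ l (σ : Word) (τs : List Word), τs.length = l →
    IsNormalDecomp σ τs → fW^[l] σ = [] ∧ ∀ m < l, fW^[m] σ ≠ [] := by
  intro l
  induction l with
  | zero => intro σ τs h1 h2; exact absurd h1 (by have := List.length_pos_iff.2 h2.2.1; omega)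
  | succ l IH =>
    intro σ τs hl h
    have hne := nd_sigma_ne_nil h
    have hτne := h.2.1
    obtain ⟨hfW, -⟩ := nd_fW h hτne
    rcases Nat.eq_zero_or_pos l with h0 | h0
    · -- τs.length = 1
      subst h0
      obtain ⟨a, ha⟩ := List.length_eq_one_iff.1 hl
      have hz : fW σ = [] := by rw [hfW, ha]; rfl
      constructor
      · rw [Function.iterate_one]; exact hz
      · intro m hm
        have : m = 0 := by omega
        subst this
        simpa using hne
    · have h2 : 2 ≤ τs.length := by omega
      have hd : IsNormalDecomp (fW σ) τs.dropLast := by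
        have := nd_dropLast h h2
        rwa [← hfW] at this
      have hdl : τs.dropLast.length = l := by
        rw [List.length_dropLast, hl]; omega
      obtain ⟨ih1, ih2⟩ := IH (fW σ) τs.dropLast hdl hd
      constructor
      · rw [Function.iterate_succ_apply]; exact ih1
      · intro m hm
        rcases Nat.eq_zero_or_pos m with hm0 | hm0
        · subst hm0; simpa using hne
        · have hm0' : m ≠ 0 := by omega
          obtain ⟨m', rfl⟩ := Nat.exists_eq_succ_of_ne_zero hm0'
          rw [Function.iterate_succ_apply]
          apply ih2
          omega

theorem nd_omega_eq {σ : Word} {τs : List Word} (h : IsNormalDecomp σ τs) :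
    τs.length = omegaW σ := by
  obtain ⟨h1, h2⟩ := nd_omega τs.length σ τs rfl h
  exact (omegaW_eq h1 h2).symm

theorem nd_exists_unique (σ : Word) (h : σ ≠ []) : ∃! τs : List Word, IsNormalDecomp σ τs :=
  ⟨decomp σ, decomp_nd σ h, fun τs ht => nd_unique σ τs ht⟩

attribute [local instance] Classical.propDecidable

def WS (t : ℕ) : Finset Word := (Finset.univ : Finset (Fin t → Letter)).image List.ofFn

lemma WS_card (t : ℕ) : (WS t).card = 3 ^ t := by
  rw [WS, Finset.card_image_of_injective _ (fun f g h => List.ofFn_inj.1 h)]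
  simp

lemma mem_WS {t : ℕ} {σ : Word} : σ ∈ WS t ↔ σ.length = t := by
  constructor
  · rintro h
    rw [WS, Finset.mem_image] at h
    obtain ⟨v, -, rfl⟩ := h
    simp
  · intro h
    subst h
    rw [WS, Finset.mem_image]
    exact ⟨fun i => σ[i.1], Finset.mem_univ _, List.ofFn_getElem⟩

lemma nd_tail_ge {σ : Word} {τs : List Word} (h : IsNormalDecomp σ τs) :
    ∀ x ∈ (τs.map List.length).tail, 2 ≤ x := by
  intro x hx
  rw [List.mem_iff_getElem] at hx
  obtain ⟨j, hj, hg⟩ := hx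
  rw [List.getElem_tail] at hg
  have hj' : j + 1 < τs.length := by
    have := hj
    simp only [List.length_tail, List.length_map] at this
    omega
  rw [List.getElem_map] at hg
  have := (h.2.2.1 ⟨j + 1, hj'⟩).2 (by show 1 ≤ j + 1; omega)
  rw [← hg]
  exact this.1

lemma nd_len_sum {σ : Word} {τs : List Word} (h : IsNormalDecomp σ τs) :
    (τs.map List.length).sum = σ.length := by
  rw [h.1, List.length_flatten]

noncomputable def compOf (t : ℕ) (ht : 0 < t) (σ : Word) : Composition t :=
  if h : σ.length = t ∧ σ ≠ [] then
    ⟨(decomp σ).map List.length,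
      by
        intro i hi
        rw [List.mem_map] at hi
        obtain ⟨a, ha, rfl⟩ := hi
        rw [List.mem_iff_get] at ha
        obtain ⟨j, rfl⟩ := ha
        have := blocks_ne_nil (decomp_nd σ h.2) j
        exact List.length_pos_iff.2 this,
      by rw [nd_len_sum (decomp_nd σ h.2), h.1]⟩
  else Composition.single t ht

lemma compOf_blocks {t : ℕ} (ht : 0 < t) {σ : Word} (h1 : σ.length = t) (h2 : σ ≠ []) :
    (compOf t ht σ).blocks = (decomp σ).map List.length := by
  rw [compOf, dif_pos ⟨h1, h2⟩]

lemma wcount_set_eq {t : ℕ} (ht : 0 < t) (c : Composition t) :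
    {σ : Word | ∃ τs : List Word, IsNormalDecomp σ τs ∧ τs.map List.length = c.blocks} =
      ↑((WS t).filter (fun σ => compOf t ht σ = c)) := by
  ext σ
  simp only [Set.mem_setOf_eq, Finset.coe_filter, Set.mem_setOf_eq, mem_WS]
  constructor
  · rintro ⟨τs, hnd, hmap⟩
    have hne := nd_sigma_ne_nil hnd
    have hlen : σ.length = t := by
      rw [← nd_len_sum hnd, hmap]
      exact c.blocks_sum
    refine ⟨hlen, ?_⟩
    apply Composition.ext
    rw [compOf_blocks ht hlen hne, ← nd_unique σ τs hnd, hmap]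
  · rintro ⟨hlen, hc⟩
    have hne : σ ≠ [] := by
      intro hcon
      subst hcon
      simp at hlen
      omega
    refine ⟨decomp σ, decomp_nd σ hne, ?_⟩
    rw [← compOf_blocks ht hlen hne, hc]

lemma wcount_eq {t : ℕ} (ht : 0 < t) (c : Composition t) :
    Wcount c.blocks = ((WS t).filter (fun σ => compOf t ht σ = c)).card := by
  rw [Wcount]
  have := wcount_set_eq ht c
  rw [show {σ : Word // ∃ τs : List Word, IsNormalDecomp σ τs ∧ τs.map List.length = c.blocks}
      = ↥{σ : Word | ∃ τs : List Word, IsNormalDecomp σ τs ∧ τs.map List.length = c.blocks}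
      from rfl, Nat.card_coe_set_eq, this, Set.ncard_coe_finset]

lemma fiber_eq {t : ℕ} (ht : 0 < t) (c : Composition t) :
    ((WS t).filter (fun σ => compOf t ht σ = c)).card =
      if ∀ i ∈ c.blocks.tail, 2 ≤ i then Wcount c.blocks else 0 := by
  split_ifs with hcond
  · exact (wcount_eq ht c).symm
  · rw [Finset.card_eq_zero, Finset.filter_eq_empty_iff]
    intro σ hσ
    intro hc
    apply hcond
    rw [mem_WS] at hσ
    have hne : σ ≠ [] := by
      intro hcon; subst hcon; simp at hσ; omega
    rw [← hc, compOf_blocks ht hσ hne]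
    exact nd_tail_ge (decomp_nd σ hne)

theorem wcount_sum {t : ℕ} (ht : 1 ≤ t) :
    (∑ c : Composition t,
      if ∀ i ∈ c.blocks.tail, 2 ≤ i then Wcount c.blocks else 0) = 3 ^ t := by
  have h1 : (WS t).card = ∑ c ∈ (Finset.univ : Finset (Composition t)),
      ((WS t).filter (fun σ => compOf t ht σ = c)).card :=
    Finset.card_eq_sum_card_fiberwise (fun x _ => Finset.mem_univ _)
  rw [← WS_card t, h1]
  exact (Finset.sum_congr rfl fun c _ => fiber_eq ht c).symm

end NDAux

/-- Every nonempty word has exactly one normal decomposition; consequently for `t ≥ 1`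
the numbers `W_{k₁⋯k_l}` over all admissible `(k₁,…,k_l)` with `k₁+⋯+k_l = t` sum to `3^t`;
moreover the number of blocks of the normal decomposition of `σ` equals `ω(σ)`. -/
theorem normal_decomposition_unique :
    (∀ σ : Word, σ ≠ [] → ∃! τs : List Word, IsNormalDecomp σ τs) ∧
    (∀ t : ℕ, 1 ≤ t →
      (∑ c : Composition t,
        if ∀ i ∈ c.blocks.tail, 2 ≤ i then Wcount c.blocks else 0) = 3 ^ t) ∧
    (∀ (σ : Word) (τs : List Word), IsNormalDecomp σ τs → τs.length = omegaW σ) := by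
  refine ⟨nd_exists_unique, fun t ht => wcount_sum ht, fun σ τs h => nd_omega_eq h⟩
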